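/- Let σ be a simplex of a finite simplicial complex X of dimension d and 0 ≤ λ < 1/(d+1). Then the map φ^λ_σ restricted to |σ| ∩ cl ⟨σ⟩_λ is surjective onto |σ|: for every y ∈ |σ| there exists x ∈ |σ| ∩ cl ⟨σ⟩_λ with φ^λ_σ(x) = y; explicitly, x with barycentric coordinates t_v(x) = t_v(y)(1 − λ·n_σ) + λ for v ∈ σ and t_v(x) = 0 otherwise works. -/

import Mathlib

/-- The truncated rescaling `φ_λ(t) = max(0, (t-λ)/(1-λ))`. -/
noncomputable def phiL (lam t : ℝ) : ℝ := max 0 ((t - lam) / (1 - lam))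

/-- The normalized push map `φ^λ_σ` (its formula does not depend on `σ`). -/
noncomputable def phiMap {V : Type*} [Fintype V] (lam : ℝ) (x : V → ℝ) : V → ℝ :=
  fun v => phiL lam (x v) / ∑ w, phiL lam (x w)

/-- The closed geometric simplex spanned by a set `s` of vertices. -/
def gsS {V : Type*} [Fintype V] (s : Set V) : Set (V → ℝ) :=
  {x | (∀ v, 0 ≤ x v) ∧ (∀ v, v ∉ s → x v = 0) ∧ ∑ v, x v = 1}

/-- The geometric realization of a simplicial complex `K`. -/
def geomReal {V : Type*} [Fintype V] (K : Set (Finset V)) : Set (V → ℝ) :=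
  ⋃ σ ∈ K, gsS (↑σ : Set V)

/-- The closure of the `λ`-cell of a simplex `σ` inside `|X|`. -/
def clLamCell {V : Type*} [Fintype V] (K : Set (Finset V)) (lam : ℝ)
    (σ : Finset V) : Set (V → ℝ) :=
  {x | x ∈ geomReal K ∧ (∀ v ∈ σ, lam ≤ x v) ∧ ∀ v ∉ σ, x v ≤ lam}

/-- `φ^λ_σ` restricted to `|σ| ∩ cl ⟨σ⟩_λ` is onto `|σ|`; the
explicit preimage of `y` has coordinates `t_v(y)(1 − λ n_σ) + λ` on `σ`. -/
theorem phiMap_surjective {V : Type*} [Fintype V] [DecidableEq V]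
    (K : Set (Finset V)) (d : ℕ)
    (hne : ∀ σ ∈ K, σ.Nonempty)
    (hK : ∀ σ ∈ K, ∀ τ : Finset V, τ ⊆ σ → τ.Nonempty → τ ∈ K)
    (hdim : ∀ σ ∈ K, σ.card ≤ d + 1)
    (lam : ℝ) (h0 : 0 ≤ lam) (h1 : lam < 1 / (d + 1))
    (σ : Finset V) (hσ : σ ∈ K) :
    ∀ y ∈ gsS (↑σ : Set V),
      (fun v => if v ∈ σ then y v * (1 - lam * σ.card) + lam else 0) ∈
          gsS (↑σ : Set V) ∩ clLamCell K lam σ ∧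
      phiMap lam (fun v => if v ∈ σ then y v * (1 - lam * σ.card) + lam else 0)
          = y := by
  intro y hy
  obtain ⟨hy0, hyout, hysum⟩ := hy
  set n : ℕ := σ.card with hn
  have hd1 : (0:ℝ) < d + 1 := by positivity
  have hlam1 : lam * (d + 1) < 1 := by
    have := (lt_div_iff₀ hd1).mp h1
    linarith
  have hnle : (n:ℝ) ≤ d + 1 := by
    have := hdim σ hσ
    exact_mod_cast this
  have hc : 0 < 1 - lam * n := by
    nlinarith
  have hn1 : (1:ℝ) ≤ n := by exact_mod_cast Finset.card_pos.mpr (hne σ hσ)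
  have hl1 : lam < 1 := by nlinarith
  have h1l : 0 < 1 - lam := by linarith
  set x : V → ℝ := fun v => if v ∈ σ then y v * (1 - lam * σ.card) + lam else 0 with hx
  have hysum' : ∑ v ∈ σ, y v = 1 := by
    rw [← hysum]
    exact Finset.sum_subset (Finset.subset_univ σ)
      (fun v _ hv => hyout v (by simpa using hv))
  have hx0 : ∀ v, 0 ≤ x v := by
    intro v
    simp only [hx]
    split
    · have := hy0 v
      nlinarith
    · exact le_refl 0
  have hxsum : ∑ v, x v = 1 := by
    simp only [hx]
    rw [Finset.sum_ite_mem, Finset.univ_inter, Finset.sum_add_distrib,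
      ← Finset.sum_mul, hysum', Finset.sum_const, nsmul_eq_mul]
    ring
  have hxg : x ∈ gsS (↑σ : Set V) := by
    refine ⟨hx0, ?_, hxsum⟩
    intro v hv
    simp only [hx]
    rw [if_neg (by simpa using hv)]
  -- phiL values
  have hphi : ∀ v, phiL lam (x v) = y v * ((1 - lam * n) / (1 - lam)) := by
    intro v
    simp only [hx, phiL]
    by_cases hv : v ∈ σ
    · rw [if_pos hv, max_eq_right]
      · field_simp
        rw [hn]
        ring
      · have := hy0 v
        apply div_nonneg _ (le_of_lt h1l)
        nlinarith
    · rw [if_neg hv, hyout v (by simpa using hv), max_eq_left]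
      · ring
      · apply div_nonpos_of_nonpos_of_nonneg <;> linarith
  have hsum : ∑ w, phiL lam (x w) = (1 - lam * n) / (1 - lam) := by
    simp only [hphi, ← Finset.sum_mul, hysum, one_mul]
  constructor
  · refine ⟨hxg, ⟨Set.mem_biUnion hσ hxg, ?_, ?_⟩⟩
    · intro v hv
      simp only [hx]
      rw [if_pos hv]
      have := hy0 v
      nlinarith
    · intro v hv
      simp only [hx]
      rw [if_neg hv]
      exact h0
  · funext v
    simp only [phiMap, ← hx]
    rw [hsum, hphi, mul_div_assoc, div_self (by positivity), mul_one]
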